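/- Convolution theorem, type 3: for set functions h, s on the powerset of N, F₃(h ∗₃ s)_B = (F₁ h)_B · (F₃ s)_B for all B ⊆ N, where (h ∗₃ s)_A = Σ_{X⊆N} h_X s_{A\X}, (F₁ h)_B = Σ_{X∩B=∅} h_X, and (F₃ s)_B = Σ_{A⊆B} (−1)^{|A|} s_A. -/

import Mathlib

open Finset

lemma sum_powerset_union_disj {N : Type*} [DecidableEq N] (u v : Finset N)
    (huv : Disjoint u v) (f : Finset N → ℝ) :
    ∑ A ∈ (u ∪ v).powerset, f A = ∑ C ∈ u.powerset, ∑ D ∈ v.powerset, f (C ∪ D) := by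
  rw [← Finset.sum_product']
  refine Finset.sum_nbij' (fun A => (A ∩ u, A ∩ v)) (fun p => p.1 ∪ p.2) ?_ ?_ ?_ ?_ ?_
  · intro A hA
    simp [mem_product, inter_subset_right]
  · intro p hp
    simp only [mem_product, mem_powerset] at hp ⊢
    exact union_subset (hp.1.trans subset_union_left) (hp.2.trans subset_union_right)
  · intro A hA
    dsimp only
    simp only [mem_powerset] at hA
    rw [← inter_union_distrib_left, inter_eq_left.mpr hA]
  · intro p hp
    simp only [mem_product, mem_powerset] at hp
    obtain ⟨h1, h2⟩ := hp
    have e1 : p.1 ∩ u = p.1 := inter_eq_left.mpr h1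
    have e2 : p.2 ∩ u = ∅ := disjoint_iff_inter_eq_empty.mp (huv.symm.mono_left h2)
    have e3 : p.1 ∩ v = ∅ := disjoint_iff_inter_eq_empty.mp (huv.mono_left h1)
    have e4 : p.2 ∩ v = p.2 := inter_eq_left.mpr h2
    ext <;> simp [union_inter_distrib_right, e1, e2, e3, e4]
  · intro A hA
    congr 1
    simp only [mem_powerset] at hA
    rw [← inter_union_distrib_left, inter_eq_left.mpr hA]

lemma sum_pows_real {N : Type*} [DecidableEq N] (x : Finset N) :
    (∑ m ∈ x.powerset, (-1 : ℝ) ^ m.card) = if x = ∅ then 1 else 0 := by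
  have := @Finset.sum_powerset_neg_one_pow_card N _ x
  have hcast : (∑ m ∈ x.powerset, (-1 : ℝ) ^ m.card)
      = ((∑ m ∈ x.powerset, (-1 : ℤ) ^ m.card : ℤ) : ℝ) := by push_cast; rfl
  rw [hcast, this]
  split <;> norm_num

lemma key_split {N : Type*} [DecidableEq N] (B X : Finset N) (g : Finset N → ℝ) :
    ∑ A ∈ B.powerset, (-1 : ℝ) ^ A.card * g (A \ X)
      = (∑ C ∈ (B ∩ X).powerset, (-1 : ℝ) ^ C.card)
        * ∑ D ∈ (B \ X).powerset, (-1 : ℝ) ^ D.card * g D := by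
  have hdisj : Disjoint (B ∩ X) (B \ X) :=
    (disjoint_sdiff_inter B X).symm
  have hB : B ∩ X ∪ B \ X = B := sup_inf_sdiff B X
  conv_lhs => rw [← hB, sum_powerset_union_disj _ _ hdisj]
  rw [Finset.sum_mul]
  refine sum_congr rfl fun C hC => ?_
  rw [Finset.mul_sum]
  refine sum_congr rfl fun D hD => ?_
  simp only [mem_powerset] at hC hD
  have hCX : C ⊆ X := hC.trans inter_subset_right
  have hDX : Disjoint D X := sdiff_disjoint.mono_left hD
  have hCD : Disjoint C D := (hDX.mono_right hCX).symm
  have hsd : (C ∪ D) \ X = D := by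
    rw [union_sdiff_distrib, sdiff_eq_empty_iff_subset.mpr hCX,
      hDX.sdiff_eq_left, empty_union]
  rw [hsd, card_union_of_disjoint hCD, pow_add]
  ring

def conv3 {N : Type*} [Fintype N] [DecidableEq N] (h s : Finset N → ℝ) (A : Finset N) : ℝ :=
  ∑ X ∈ (univ : Finset N).powerset, h X * s (A \ X)

def dsft1 {N : Type*} [Fintype N] [DecidableEq N] (h : Finset N → ℝ) (B : Finset N) : ℝ :=
  ∑ X ∈ (univ : Finset N).powerset.filter (fun X => X ∩ B = ∅), h X

def dsft3 {N : Type*} [Fintype N] [DecidableEq N] (s : Finset N → ℝ) (B : Finset N) : ℝ :=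
  ∑ A ∈ B.powerset, (-1 : ℝ) ^ A.card * s A

theorem conv_theorem_type3 {N : Type*} [Fintype N] [DecidableEq N]
    (h s : Finset N → ℝ) (B : Finset N) :
    dsft3 (conv3 h s) B = dsft1 h B * dsft3 s B := by
  have L : dsft3 (conv3 h s) B
      = ∑ X ∈ (univ : Finset N).powerset,
          h X * ∑ A ∈ B.powerset, (-1 : ℝ) ^ A.card * s (A \ X) := by
    unfold dsft3 conv3
    simp_rw [Finset.mul_sum]
    rw [Finset.sum_comm]
    refine sum_congr rfl fun X _ => ?_
    exact sum_congr rfl fun A _ => by ring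
  rw [L]
  have step : ∀ X ∈ (univ : Finset N).powerset,
      h X * ∑ A ∈ B.powerset, (-1 : ℝ) ^ A.card * s (A \ X)
        = if X ∩ B = ∅ then h X * dsft3 s B else 0 := by
    intro X _
    rw [key_split B X s, sum_pows_real]
    by_cases hXB : X ∩ B = ∅
    · have hBX : B ∩ X = ∅ := by rw [inter_comm]; exact hXB
      have hBs : B \ X = B := sdiff_eq_self_iff_disjoint.mpr
        (disjoint_iff_inter_eq_empty.mpr hXB)
      simp [hXB, hBX, hBs, dsft3]
    · have hBX : B ∩ X ≠ ∅ := fun hc => hXB (by rw [inter_comm]; exact hc)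
      simp [hXB, hBX]
  rw [Finset.sum_congr rfl step, ← Finset.sum_filter, ← Finset.sum_mul]
  rfl
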